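/- arXiv:0901.4506 — 3 statements merged into one kernel-verified Lean document; each statement's English description precedes it below -/
import Mathlib

section
/- Let ρ_{RA} = ∑_i p_i ρ_R^i ⊗ |i⟩⟨i|_A be a classically correlated state on H_R⊗H_A, where {|i⟩}_{i=1}^d is an orthonormal basis of H_A ≅ C^d, p is a probability distribution, and each ρ_R^i is a state on H_R. Let {|e^i⟩}_{i=1}^d be an orthonormal basis of C^d that is mutually unbiased with respect to {|i⟩}, i.e. |⟨e^i|j⟩|² = 1/d for all i,j, and define the isometry M_A := ∑_i |e_B^i⟩⟨e_A^i| ⊗ |e_E^i⟩ from H_A to H_B⊗H_E with H_B ≅ H_E ≅ C^d. Then the output state ς_{RBE} := (1_R⊗M_A) ρ_{RA} (1_R⊗M_A†) satisfies ς_{RB} = ρ_R ⊗ (1_B/d) and ς_{RE} = ρ_R ⊗ (1_E/d), where ρ_R := ∑_i p_i ρ_R^i. In particular I^{R:B}(ς_{RBE}) = I^{R:E}(ς_{RBE}) = 0, so the correlations of a classically correlated state can be perfectly eliminated. -/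
open Matrix BigOperators
open scoped Kronecker ComplexOrder

noncomputable section

variable {α β γ : Type*}

/-- Partial trace over the second tensor factor. -/
def ptrace2 [Fintype β] (ρ : Matrix (α × β) (α × β) ℂ) : Matrix α α ℂ :=
  Matrix.of fun i j => ∑ k, ρ (i, k) (j, k)

/-- Partial trace over the first tensor factor. -/
def ptrace1 [Fintype α] (ρ : Matrix (α × β) (α × β) ℂ) : Matrix β β ℂ :=
  Matrix.of fun i j => ∑ k, ρ (k, i) (k, j)

open scoped Classical in
/-- von Neumann entropy, in bits (base-2 logarithm), via the eigenvalues of a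
Hermitian matrix (with the convention `0 * log 0 = 0`). -/
def vnEntropy [Fintype α] [DecidableEq α] (ρ : Matrix α α ℂ) : ℝ :=
  if h : ρ.IsHermitian then -∑ i, (h.eigenvalues i) * Real.logb 2 (h.eigenvalues i) else 0

/-- Quantum mutual information `I^{X:Y} = S(X) + S(Y) - S(XY)` of a bipartite state. -/
def mutInfo [Fintype α] [DecidableEq α] [Fintype β] [DecidableEq β]
    (ρ : Matrix (α × β) (α × β) ℂ) : ℝ :=
  vnEntropy (ptrace2 ρ) + vnEntropy (ptrace1 ρ) - vnEntropy ρ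

/-- Coherent information `I_c^{A→R} = S(R) - S(RA)` of a bipartite state on `R × A`. -/
def cohInfo [Fintype α] [DecidableEq α] [Fintype β] [DecidableEq β]
    (ρ : Matrix (α × β) (α × β) ℂ) : ℝ :=
  vnEntropy (ptrace2 ρ) - vnEntropy ρ

/-- Marginal on `R, B` of a tripartite state on `R × (B × E)`. -/
def mRB [Fintype γ] (ς : Matrix (α × (β × γ)) (α × (β × γ)) ℂ) : Matrix (α × β) (α × β) ℂ :=
  Matrix.of fun x y => ∑ m, ς (x.1, (x.2, m)) (y.1, (y.2, m))

/-- Marginal on `R, E` of a tripartite state on `R × (B × E)`. -/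
def mRE [Fintype β] (ς : Matrix (α × (β × γ)) (α × (β × γ)) ℂ) : Matrix (α × γ) (α × γ) ℂ :=
  Matrix.of fun x y => ∑ m, ς (x.1, (m, x.2)) (y.1, (m, y.2))

/-- A state is a positive semidefinite matrix of unit trace. -/
def IsState [Fintype α] (ρ : Matrix α α ℂ) : Prop := ρ.PosSemidef ∧ ρ.trace = 1

/-- The ε-ineliminable correlations `Ξ_A(ρ_{RA}; ε)`: the least value of `I^{R:B}` of the
output state `ς_{RBE} = (1⊗V) ρ (1⊗V)†`, over all isometries `V : H_A → H_B ⊗ H_E`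
(into arbitrary finite-dimensional spaces) satisfying `I^{R:E}(ς) ≤ ε` and
`I^{R:E}(ς) ≤ I^{R:B}(ς)`. -/
def Xi {dR dA : Type*} [Fintype dR] [DecidableEq dR] [Fintype dA] [DecidableEq dA]
    (ρ : Matrix (dR × dA) (dR × dA) ℂ) (ε : ℝ) : ℝ :=
  sInf { x : ℝ | ∃ (b e : ℕ) (V : Matrix (Fin b × Fin e) dA ℂ), Vᴴ * V = 1 ∧
    mutInfo (mRE (((1 : Matrix dR dR ℂ) ⊗ₖ V) * ρ * ((1 : Matrix dR dR ℂ) ⊗ₖ V)ᴴ)) ≤ ε ∧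
    mutInfo (mRE (((1 : Matrix dR dR ℂ) ⊗ₖ V) * ρ * ((1 : Matrix dR dR ℂ) ⊗ₖ V)ᴴ)) ≤
      mutInfo (mRB (((1 : Matrix dR dR ℂ) ⊗ₖ V) * ρ * ((1 : Matrix dR dR ℂ) ⊗ₖ V)ᴴ)) ∧
    x = mutInfo (mRB (((1 : Matrix dR dR ℂ) ⊗ₖ V) * ρ * ((1 : Matrix dR dR ℂ) ⊗ₖ V)ᴴ)) }

/-- The advantage-preserving ineliminable correlations `Ξ_A(ρ_{RA})` (privacy
parameter `ε = ∞`): only the constraint `I^{R:E}(ς) ≤ I^{R:B}(ς)` is imposed. -/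
def XiAP {dR dA : Type*} [Fintype dR] [DecidableEq dR] [Fintype dA] [DecidableEq dA]
    (ρ : Matrix (dR × dA) (dR × dA) ℂ) : ℝ :=
  sInf { x : ℝ | ∃ (b e : ℕ) (V : Matrix (Fin b × Fin e) dA ℂ), Vᴴ * V = 1 ∧
    mutInfo (mRE (((1 : Matrix dR dR ℂ) ⊗ₖ V) * ρ * ((1 : Matrix dR dR ℂ) ⊗ₖ V)ᴴ)) ≤
      mutInfo (mRB (((1 : Matrix dR dR ℂ) ⊗ₖ V) * ρ * ((1 : Matrix dR dR ℂ) ⊗ₖ V)ᴴ)) ∧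
    x = mutInfo (mRB (((1 : Matrix dR dR ℂ) ⊗ₖ V) * ρ * ((1 : Matrix dR dR ℂ) ⊗ₖ V)ᴴ)) }

end

noncomputable section AuxProofs
open Polynomial

lemma aux_charpoly_conj_unitary {n : Type*} [Fintype n] [DecidableEq n]
    (U A : Matrix n n ℂ) (hU : U * Uᴴ = 1) :
    (U * A * Uᴴ).charpoly = A.charpoly := by
  have hmap : (C : ℂ →+* ℂ[X]).mapMatrix U * (C : ℂ →+* ℂ[X]).mapMatrix Uᴴ = 1 := by
    rw [← _root_.map_mul, hU, _root_.map_one]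
  have key : charmatrix (U * A * Uᴴ) =
      (C : ℂ →+* ℂ[X]).mapMatrix U * charmatrix A * (C : ℂ →+* ℂ[X]).mapMatrix Uᴴ := by
    unfold charmatrix
    rw [mul_sub, sub_mul, ← _root_.map_mul, ← _root_.map_mul]
    congr 1
    have : (Matrix.scalar n (X : ℂ[X])) = (X : ℂ[X]) • (1 : Matrix n n ℂ[X]) := by
      simp [Matrix.scalar, Matrix.smul_one_eq_diagonal]
    rw [this, mul_smul_comm, mul_one, smul_mul_assoc, hmap]
  have hdet : ((C : ℂ →+* ℂ[X]).mapMatrix U).det * ((C : ℂ →+* ℂ[X]).mapMatrix Uᴴ).det = 1 := by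
    rw [← Matrix.det_mul, hmap, Matrix.det_one]
  unfold Matrix.charpoly
  rw [key, Matrix.det_mul, Matrix.det_mul, mul_comm ((C : ℂ →+* ℂ[X]).mapMatrix U).det,
    mul_assoc, hdet, mul_one]

lemma aux_charpoly_diagonal {n : Type*} [Fintype n] [DecidableEq n] (w : n → ℂ) :
    (Matrix.diagonal w).charpoly = ∏ i, (X - C (w i)) := by
  have : charmatrix (Matrix.diagonal w) = Matrix.diagonal fun i => X - C (w i) := by
    ext i j
    by_cases h : i = j
    · subst h; simp
    · simp [h, Matrix.diagonal_apply_ne _ h]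
  rw [Matrix.charpoly, this, Matrix.det_diagonal]

/-- von Neumann entropy computed from any unitary diagonalization. -/
lemma aux_vnEntropy_diag {n : Type*} [Fintype n] [DecidableEq n]
    (ρ : Matrix n n ℂ) (hρ : ρ.IsHermitian) (U : Matrix n n ℂ) (hU : U * Uᴴ = 1)
    (v : n → ℝ) (h : ρ = U * Matrix.diagonal (fun i => ((v i : ℂ))) * Uᴴ) :
    vnEntropy ρ = -∑ i, v i * Real.logb 2 (v i) := by
  unfold vnEntropy
  have h1 : ρ.charpoly = ∏ i, (X - C ((v i : ℂ))) := by
    rw [h, aux_charpoly_conj_unitary _ _ hU, aux_charpoly_diagonal]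
  have hU2 : (hρ.eigenvectorUnitary : Matrix n n ℂ) *
      ((hρ.eigenvectorUnitary : Matrix n n ℂ))ᴴ = 1 := by
    rw [← Matrix.star_eq_conjTranspose]
    exact (Matrix.mem_unitaryGroup_iff).mp (hρ.eigenvectorUnitary).2
  have h2 : ρ.charpoly = ∏ i, (X - C ((hρ.eigenvalues i : ℂ))) := by
    conv_lhs => rw [hρ.spectral_theorem]
    rw [Unitary.conjStarAlgAut_apply]
    rw [show (star ((hρ.eigenvectorUnitary : Matrix n n ℂ))) =
      ((hρ.eigenvectorUnitary : Matrix n n ℂ))ᴴ from rfl, aux_charpoly_conj_unitary _ _ hU2]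
    exact aux_charpoly_diagonal _
  have key : ∀ w : n → ℂ, (∏ i, (X - C (w i))).roots = Finset.univ.val.map w := by
    intro w
    have : (Finset.univ.val.map fun i => (X - C (w i))) =
        ((Finset.univ.val.map w).map fun a => X - C a) := by
      rw [Multiset.map_map]; rfl
    rw [Finset.prod_eq_multiset_prod, this, Polynomial.roots_multiset_prod_X_sub_C]
  have hroots : (Finset.univ.val.map fun i => ((v i : ℂ))) =
      (Finset.univ.val.map fun i => ((hρ.eigenvalues i : ℂ))) := by
    have e := congrArg Polynomial.roots (h1.symm.trans h2)
    rwa [key, key] at e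
  rw [dif_pos hρ]
  congr 1
  set F : ℂ → ℝ := fun z => z.re * Real.logb 2 z.re with hF
  have hv : ∀ (w : n → ℝ), ∑ i, w i * Real.logb 2 (w i) =
      ((Finset.univ.val.map fun i => ((w i : ℂ))).map F).sum := by
    intro w
    rw [Multiset.map_map, Finset.sum_eq_multiset_sum]
    congr 1
  rw [hv, hv, hroots]

lemma aux_kron_conjT {l m n p : Type*} (A : Matrix l m ℂ) (B : Matrix n p ℂ) :
    (A ⊗ₖ B)ᴴ = Aᴴ ⊗ₖ Bᴴ := by
  ext x y
  simp [Matrix.conjTranspose_apply, Matrix.kroneckerMap_apply, star_mul']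

lemma aux_trace_eq_sum_eig {n : Type*} [Fintype n] [DecidableEq n]
    (A : Matrix n n ℂ) (hA : A.IsHermitian) :
    A.trace = ∑ i, ((hA.eigenvalues i : ℂ)) := by
  conv_lhs => rw [hA.spectral_theorem]
  rw [Unitary.conjStarAlgAut_apply]
  rw [Matrix.trace_mul_cycle]
  rw [show (star ((hA.eigenvectorUnitary : Matrix n n ℂ)) *
      (hA.eigenvectorUnitary : Matrix n n ℂ)) = 1 from
    Matrix.mem_unitaryGroup_iff'.mp (hA.eigenvectorUnitary).2]
  rw [one_mul, Matrix.trace_diagonal]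
  rfl

lemma aux_mutInfo_prod {n : Type*} [Fintype n] [DecidableEq n] (d : ℕ) (hd : 0 < d)
    (A : Matrix n n ℂ) (hA : A.IsHermitian) (htr : A.trace = 1) :
    mutInfo (A ⊗ₖ (((d : ℂ))⁻¹ • (1 : Matrix (Fin d) (Fin d) ℂ))) = 0 := by
  have hdR : (d : ℝ) ≠ 0 := Nat.cast_ne_zero.mpr hd.ne'
  have hdC : (d : ℂ) ≠ 0 := Nat.cast_ne_zero.mpr hd.ne'
  set lam := hA.eigenvalues with hlam
  have hsumlam : ∑ i, lam i = 1 := by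
    have h2 := (aux_trace_eq_sum_eig A hA).symm.trans htr
    have h3 : ((∑ i, lam i : ℝ) : ℂ) = ((1 : ℝ) : ℂ) := by push_cast; rw [h2]
    exact_mod_cast h3
  have hscal : (((d : ℂ))⁻¹ • (1 : Matrix (Fin d) (Fin d) ℂ)) =
      Matrix.diagonal (fun _ : Fin d => ((((d : ℝ))⁻¹ : ℝ) : ℂ)) := by
    rw [Matrix.smul_one_eq_diagonal]
    push_cast
    rfl
  have hscal_herm : (((d : ℂ))⁻¹ • (1 : Matrix (Fin d) (Fin d) ℂ)).IsHermitian := by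
    rw [hscal, Matrix.IsHermitian, Matrix.diagonal_conjTranspose]
    simp [Pi.star_def, Complex.conj_ofReal]
  have hS1 : vnEntropy (((d : ℂ))⁻¹ • (1 : Matrix (Fin d) (Fin d) ℂ)) = Real.logb 2 d := by
    rw [aux_vnEntropy_diag _ hscal_herm 1 (by simp) (fun _ : Fin d => ((d : ℝ))⁻¹)
      (by rw [hscal]; simp)]
    rw [Finset.sum_const, Finset.card_univ, Fintype.card_fin, Real.logb_inv, nsmul_eq_mul]
    field_simp
  set V : Matrix n n ℂ := (hA.eigenvectorUnitary : Matrix n n ℂ) with hV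
  have hVV : V * Vᴴ = 1 := by
    rw [← Matrix.star_eq_conjTranspose]
    exact (Matrix.mem_unitaryGroup_iff).mp (hA.eigenvectorUnitary).2
  have hAspec : A = V * Matrix.diagonal (fun i => ((lam i : ℂ))) * Vᴴ := by
    conv_lhs => rw [hA.spectral_theorem]
    rfl
  have hprod : A ⊗ₖ (((d : ℂ))⁻¹ • (1 : Matrix (Fin d) (Fin d) ℂ)) =
      (V ⊗ₖ (1 : Matrix (Fin d) (Fin d) ℂ)) *
        Matrix.diagonal (fun q : n × Fin d => ((lam q.1 / d : ℝ) : ℂ)) *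
        (V ⊗ₖ (1 : Matrix (Fin d) (Fin d) ℂ))ᴴ := by
    rw [aux_kron_conjT, Matrix.conjTranspose_one]
    have hdd : Matrix.diagonal (fun q : n × Fin d => ((lam q.1 / d : ℝ) : ℂ)) =
        Matrix.diagonal (fun i => ((lam i : ℂ))) ⊗ₖ
          Matrix.diagonal (fun _ : Fin d => (((d : ℝ))⁻¹ : ℂ)) := by
      rw [Matrix.diagonal_kronecker_diagonal]
      congr 1; funext q; push_cast; ring
    rw [hdd, ← Matrix.mul_kronecker_mul, ← Matrix.mul_kronecker_mul, one_mul, mul_one,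
      ← hAspec, hscal]
    norm_cast
  have hherm : (A ⊗ₖ (((d : ℂ))⁻¹ • (1 : Matrix (Fin d) (Fin d) ℂ))).IsHermitian := by
    rw [Matrix.IsHermitian, aux_kron_conjT, hA.eq, hscal_herm.eq]
  have hunit : (V ⊗ₖ (1 : Matrix (Fin d) (Fin d) ℂ)) *
      (V ⊗ₖ (1 : Matrix (Fin d) (Fin d) ℂ))ᴴ = 1 := by
    rw [aux_kron_conjT, Matrix.conjTranspose_one, ← Matrix.mul_kronecker_mul, hVV, mul_one,
      Matrix.one_kronecker_one]
  have hSA : vnEntropy A = -∑ i, lam i * Real.logb 2 (lam i) := by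
    unfold vnEntropy
    rw [dif_pos hA]
  have hS2 : vnEntropy (A ⊗ₖ (((d : ℂ))⁻¹ • (1 : Matrix (Fin d) (Fin d) ℂ)))
      = vnEntropy A + Real.logb 2 d := by
    rw [aux_vnEntropy_diag _ hherm _ hunit _ hprod, hSA]
    rw [Fintype.sum_prod_type]
    have hper : ∀ i : n, ∑ _k : Fin d, (lam i / d) * Real.logb 2 (lam i / d)
        = lam i * Real.logb 2 (lam i) - lam i * Real.logb 2 d := by
      intro i
      rw [Finset.sum_const, Finset.card_univ, Fintype.card_fin, nsmul_eq_mul]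
      rcases eq_or_ne (lam i) 0 with hx | hx
      · simp [hx]
      · rw [Real.logb_div hx hdR]
        field_simp
    rw [Finset.sum_congr rfl fun i _ => hper i, Finset.sum_sub_distrib, ← Finset.sum_mul,
      hsumlam, one_mul]
    ring
  have hpt2 : ptrace2 (A ⊗ₖ (((d : ℂ))⁻¹ • (1 : Matrix (Fin d) (Fin d) ℂ))) = A := by
    ext i j
    simp only [ptrace2, Matrix.of_apply, Matrix.kroneckerMap_apply, Matrix.smul_apply,
      Matrix.one_apply_eq, smul_eq_mul, mul_one]
    rw [Finset.sum_const, Finset.card_univ, Fintype.card_fin, nsmul_eq_mul]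
    rw [show ((d : ℂ)) * (A i j * ((d : ℂ))⁻¹) = A i j * ((d : ℂ) * ((d : ℂ))⁻¹) by ring,
      mul_inv_cancel₀ hdC, mul_one]
  have hpt1 : ptrace1 (A ⊗ₖ (((d : ℂ))⁻¹ • (1 : Matrix (Fin d) (Fin d) ℂ))) =
      (((d : ℂ))⁻¹ • (1 : Matrix (Fin d) (Fin d) ℂ)) := by
    ext i j
    simp only [ptrace1, Matrix.of_apply, Matrix.kroneckerMap_apply]
    rw [← Finset.sum_mul, show (∑ k, A k k) = A.trace from rfl, htr, one_mul]
  rw [mutInfo, hpt2, hpt1, hS1, hS2]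
  ring

end AuxProofs

/-- For a classically correlated state
`ρ_{RA} = ∑ᵢ pᵢ ρ_R^i ⊗ |i⟩⟨i|_A`, the isometry `M_A = ∑ᵢ |e_B^i⟩⟨e_A^i| ⊗ |e_E^i⟩`
built from a mutually unbiased orthonormal basis `{|eⁱ⟩}` perfectly eliminates the
correlations: `ς_{RB} = ρ_R ⊗ 1_B/d` and `ς_{RE} = ρ_R ⊗ 1_E/d`, so that
`I^{R:B}(ς) = I^{R:E}(ς) = 0`. -/
theorem classically_correlated_states_perfectly_eliminable
    {dR : Type*} [Fintype dR] [DecidableEq dR] (d : ℕ) (hd : 0 < d)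
    (p : Fin d → ℝ) (hp0 : ∀ i, 0 ≤ p i) (hp1 : ∑ i, p i = 1)
    (ρi : Fin d → Matrix dR dR ℂ) (hρi : ∀ i, IsState (ρi i))
    (f : Fin d → Fin d → ℂ)
    (hf : ∀ i j, ∑ k, star (f i k) * f j k = if i = j then 1 else 0)
    (e : Fin d → Fin d → ℂ)
    (he : ∀ i j, ∑ k, star (e i k) * e j k = if i = j then 1 else 0)
    (hmub : ∀ i j, Complex.normSq (∑ k, star (e i k) * f j k) = (d : ℝ)⁻¹)
    (ρRA : Matrix (dR × Fin d) (dR × Fin d) ℂ)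
    (hρRA : ρRA = ∑ i, (p i : ℝ) • ((ρi i) ⊗ₖ Matrix.vecMulVec (f i) (star (f i))))
    (M : Matrix (Fin d × Fin d) (Fin d) ℂ)
    (hM : M = Matrix.of fun x a => ∑ i, e i x.1 * e i x.2 * star (e i a))
    (ς : Matrix (dR × (Fin d × Fin d)) (dR × (Fin d × Fin d)) ℂ)
    (hς : ς = (((1 : Matrix dR dR ℂ) ⊗ₖ M) * ρRA * ((1 : Matrix dR dR ℂ) ⊗ₖ M)ᴴ)) :
    Mᴴ * M = 1 ∧
    mRB ς = (∑ i, (p i : ℝ) • ρi i) ⊗ₖ (((d : ℂ))⁻¹ • (1 : Matrix (Fin d) (Fin d) ℂ)) ∧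
    mRE ς = (∑ i, (p i : ℝ) • ρi i) ⊗ₖ (((d : ℂ))⁻¹ • (1 : Matrix (Fin d) (Fin d) ℂ)) ∧
    mutInfo (mRB ς) = 0 ∧ mutInfo (mRE ς) = 0 := by
  have hdC : (d : ℂ) ≠ 0 := Nat.cast_ne_zero.mpr hd.ne'
  -- orthonormality in the convenient form
  have hee : ∀ j k : Fin d, ∑ m, e j m * star (e k m) = if j = k then (1 : ℂ) else 0 := by
    intro j k
    have h0 := congrArg star (he j k)
    rw [star_sum, show star (if j = k then (1 : ℂ) else 0) = if j = k then (1 : ℂ) else 0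
      from by split <;> simp] at h0
    rw [← h0]
    exact Finset.sum_congr rfl fun m _ => by simp only [star_mul', star_star]
  -- completeness of the basis e
  have hEE : (Matrix.of e) * (Matrix.of e)ᴴ = (1 : Matrix (Fin d) (Fin d) ℂ) := by
    ext j k
    simp only [Matrix.mul_apply, Matrix.conjTranspose_apply, Matrix.of_apply, Matrix.one_apply]
    exact hee j k
  have hEE' := mul_eq_one_comm.mp hEE
  have hcomp' : ∀ a b : Fin d, ∑ i, star (e i a) * e i b = if a = b then (1 : ℂ) else 0 := by
    intro a b
    have h0 := congrFun (congrFun hEE' a) b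
    simpa only [Matrix.mul_apply, Matrix.conjTranspose_apply, Matrix.of_apply,
      Matrix.one_apply] using h0
  have hcomp : ∀ a b : Fin d, ∑ i, e i a * star (e i b) = if a = b then (1 : ℂ) else 0 := by
    intro a b
    have h0 := congrArg star (hcomp' a b)
    rw [star_sum, show star (if a = b then (1 : ℂ) else 0) = if a = b then (1 : ℂ) else 0
      from by split <;> simp] at h0
    rw [← h0]
    exact Finset.sum_congr rfl fun m _ => by simp only [star_mul', star_star]
  -- the overlaps c j i and their modulus
  set c : Fin d → Fin d → ℂ := fun j i => ∑ a, star (e j a) * f i a with hcdef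
  have hcc : ∀ j i, c j i * star (c j i) = ((d : ℂ))⁻¹ := by
    intro j i
    rw [show star (c j i) = (starRingEnd ℂ) (c j i) from rfl, Complex.mul_conj, hmub j i]
    push_cast
    ring
  -- Part 1 : M is an isometry
  have hMM : Mᴴ * M = 1 := by
    ext a b
    rw [Matrix.mul_apply]
    have expand : ∀ x : Fin d × Fin d, Mᴴ a x * M x b
        = ∑ i, ∑ j, (star (e i x.1) * e j x.1) *
            ((star (e i x.2) * e j x.2) * (e i a * star (e j b))) := by
      intro x
      rw [Matrix.conjTranspose_apply, hM]
      simp only [Matrix.of_apply]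
      rw [star_sum, Finset.sum_mul_sum]
      refine Finset.sum_congr rfl fun i _ => Finset.sum_congr rfl fun j _ => ?_
      simp only [star_mul', star_star]
      ring
    calc ∑ x : Fin d × Fin d, Mᴴ a x * M x b
        = ∑ i, ∑ j, (∑ x1, star (e i x1) * e j x1) *
            ((∑ x2, star (e i x2) * e j x2) * (e i a * star (e j b))) := by
          simp only [expand]
          rw [Finset.sum_comm]
          refine Finset.sum_congr rfl fun i _ => ?_
          rw [Finset.sum_comm]
          refine Finset.sum_congr rfl fun j _ => ?_
          rw [Fintype.sum_prod_type]
          dsimp only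
          refine Eq.trans (Finset.sum_congr rfl fun x1 _ => ?_) (by rw [← Finset.sum_mul])
          rw [← Finset.mul_sum, ← Finset.sum_mul]
      _ = ∑ i, e i a * star (e i b) := by
          refine Finset.sum_congr rfl fun i _ => ?_
          rw [Finset.sum_congr rfl fun j (_ : j ∈ Finset.univ) => by rw [he i j]]
          simp
      _ = (1 : Matrix (Fin d) (Fin d) ℂ) a b := by rw [hcomp a b, Matrix.one_apply]
  -- the vector w i = M (f i)
  set w : Fin d → (Fin d × Fin d) → ℂ := fun i x => ∑ j, e j x.1 * e j x.2 * c j i with hwdef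
  have hMf : ∀ i x, (∑ a, M x a * f i a) = w i x := by
    intro i x
    rw [hM]
    simp only [Matrix.of_apply, Finset.sum_mul, hwdef, hcdef, Finset.mul_sum]
    rw [Finset.sum_comm]
    exact Finset.sum_congr rfl fun j _ => Finset.sum_congr rfl fun a _ => by ring
  have hNw : ∀ i, M * Matrix.vecMulVec (f i) (star (f i)) * Mᴴ
      = Matrix.of fun x y => w i x * star (w i y) := by
    intro i
    ext x y
    rw [Matrix.of_apply, ← hMf i x, ← hMf i y]
    simp only [Matrix.mul_apply, Matrix.conjTranspose_apply, Matrix.vecMulVec_apply,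
      Pi.star_apply]
    rw [star_sum, Finset.sum_mul_sum]
    rw [Finset.sum_comm]
    refine Finset.sum_congr rfl fun a' _ => ?_
    rw [Finset.sum_mul]
    refine Finset.sum_congr rfl fun a _ => ?_
    simp only [star_mul']
    ring
  -- the key collapse computation
  have key : ∀ (b b' : Fin d) (γ : Fin d → ℂ), (∀ j, γ j * star (γ j) = ((d : ℂ))⁻¹) →
      ∑ m, (∑ j, e j b * e j m * γ j) * star (∑ k, e k b' * e k m * γ k)
        = ((d : ℂ))⁻¹ * (if b = b' then 1 else 0) := by
    intro b b' γ hγ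
    have expand : ∀ m, (∑ j, e j b * e j m * γ j) * star (∑ k, e k b' * e k m * γ k)
        = ∑ j, ∑ k, (e j m * star (e k m)) *
            ((e j b * γ j) * (star (e k b') * star (γ k))) := by
      intro m
      rw [star_sum, Finset.sum_mul_sum]
      refine Finset.sum_congr rfl fun j _ => Finset.sum_congr rfl fun k _ => ?_
      simp only [star_mul']
      ring
    calc ∑ m, (∑ j, e j b * e j m * γ j) * star (∑ k, e k b' * e k m * γ k)
        = ∑ j, ∑ k, (∑ m, e j m * star (e k m)) *
            ((e j b * γ j) * (star (e k b') * star (γ k))) := by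
          simp only [expand]
          rw [Finset.sum_comm]
          refine Finset.sum_congr rfl fun j _ => ?_
          rw [Finset.sum_comm]
          refine Finset.sum_congr rfl fun k _ => ?_
          rw [Finset.sum_mul]
      _ = ∑ j, (e j b * γ j) * (star (e j b') * star (γ j)) := by
          refine Finset.sum_congr rfl fun j _ => ?_
          rw [Finset.sum_congr rfl fun k (_ : k ∈ Finset.univ) => by rw [hee j k]]
          simp
      _ = ∑ j, ((d : ℂ))⁻¹ * (e j b * star (e j b')) := by
          refine Finset.sum_congr rfl fun j _ => ?_
          rw [← hγ j]
          ring
      _ = ((d : ℂ))⁻¹ * (if b = b' then 1 else 0) := by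
          rw [← Finset.mul_sum, hcomp b b']
  -- the explicit form of ς
  have hςsum : ς = ∑ i, (p i : ℝ) •
      ((ρi i) ⊗ₖ (Matrix.of fun x y => w i x * star (w i y))) := by
    rw [hς, hρRA, Matrix.mul_sum, Matrix.sum_mul]
    refine Finset.sum_congr rfl fun i _ => ?_
    rw [Matrix.mul_smul, Matrix.smul_mul]
    congr 1
    rw [aux_kron_conjT, Matrix.conjTranspose_one, ← Matrix.mul_kronecker_mul,
      ← Matrix.mul_kronecker_mul, one_mul, mul_one, hNw i]
  -- marginals
  have hmRB : mRB ς = (∑ i, (p i : ℝ) • ρi i) ⊗ₖ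
      (((d : ℂ))⁻¹ • (1 : Matrix (Fin d) (Fin d) ℂ)) := by
    ext x y
    obtain ⟨r, b⟩ := x
    obtain ⟨r', b'⟩ := y
    rw [hςsum]
    simp only [mRB, Matrix.of_apply, Matrix.sum_apply, Matrix.smul_apply,
      Matrix.kroneckerMap_apply, Matrix.smul_apply, Matrix.one_apply, Complex.real_smul,
      smul_eq_mul]
    rw [Finset.sum_comm]
    have hRHS : ∀ i, ∑ m, (p i : ℂ) * (ρi i r r' * (w i (b, m) * star (w i (b', m))))
        = (p i : ℂ) * (ρi i r r' * (((d : ℂ))⁻¹ * (if b = b' then 1 else 0))) := by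
      intro i
      rw [← Finset.mul_sum, ← Finset.mul_sum]
      rw [show (∑ m, w i (b, m) * star (w i (b', m)))
        = ((d : ℂ))⁻¹ * (if b = b' then 1 else 0) from key b b' (fun j => c j i)
          (fun j => hcc j i)]
    rw [Finset.sum_congr rfl fun i _ => hRHS i, Finset.sum_mul]
    refine Finset.sum_congr rfl fun i _ => by ring
  have hmRE : mRE ς = (∑ i, (p i : ℝ) • ρi i) ⊗ₖ
      (((d : ℂ))⁻¹ • (1 : Matrix (Fin d) (Fin d) ℂ)) := by
    ext x y
    obtain ⟨r, b⟩ := x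
    obtain ⟨r', b'⟩ := y
    rw [hςsum]
    simp only [mRE, Matrix.of_apply, Matrix.sum_apply, Matrix.smul_apply,
      Matrix.kroneckerMap_apply, Matrix.smul_apply, Matrix.one_apply, Complex.real_smul,
      smul_eq_mul]
    rw [Finset.sum_comm]
    have hw : ∀ i m b, w i (m, b) = ∑ j, e j b * e j m * c j i := by
      intro i m b
      exact Finset.sum_congr rfl fun j _ => by ring
    have hRHS : ∀ i, ∑ m, (p i : ℂ) * (ρi i r r' * (w i (m, b) * star (w i (m, b'))))
        = (p i : ℂ) * (ρi i r r' * (((d : ℂ))⁻¹ * (if b = b' then 1 else 0))) := by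
      intro i
      rw [← Finset.mul_sum, ← Finset.mul_sum]
      rw [show (∑ m, w i (m, b) * star (w i (m, b')))
        = ((d : ℂ))⁻¹ * (if b = b' then 1 else 0) from by
          rw [Finset.sum_congr rfl fun m (_ : m ∈ Finset.univ) => by rw [hw i m b, hw i m b']]
          exact key b b' (fun j => c j i) (fun j => hcc j i)]
    rw [Finset.sum_congr rfl fun i _ => hRHS i, Finset.sum_mul]
    refine Finset.sum_congr rfl fun i _ => by ring
  -- the average state is Hermitian with unit trace
  have hAherm : (∑ i, (p i : ℝ) • ρi i).IsHermitian := by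
    rw [Matrix.IsHermitian, Matrix.conjTranspose_sum]
    refine Finset.sum_congr rfl fun i _ => ?_
    rw [Matrix.conjTranspose_smul, star_trivial, (hρi i).1.isHermitian.eq]
  have hAtr : (∑ i, (p i : ℝ) • ρi i).trace = 1 := by
    rw [Matrix.trace_sum]
    have : ∀ i, ((p i : ℝ) • ρi i).trace = ((p i : ℝ) : ℂ) := by
      intro i
      rw [Matrix.trace_smul, (hρi i).2]
      simp [Complex.real_smul]
    rw [Finset.sum_congr rfl fun i _ => this i]
    push_cast
    exact_mod_cast congrArg (fun x : ℝ => (x : ℂ)) hp1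
  have hmut := aux_mutInfo_prod d hd _ hAherm hAtr
  exact ⟨hMM, hmRB, hmRE, by rw [hmRB]; exact hmut, by rw [hmRE]; exact hmut⟩
end

section
/- Let {|φ^m_A⟩}_m be vectors in H_A forming a rank-one POVM, i.e. ∑_m |φ^m_A⟩⟨φ^m_A| = 1_A, and let {|m_B⟩}_m, {|m_E⟩}_m be orthonormal families in H_B and H_E respectively. Then V_P := ∑_m (|m_B⟩⊗|m_E⟩)⟨φ^m_A| is an isometry from H_A to H_B⊗H_E, and for every bipartite state ρ_{RA}, the output state ς_{RBE} := (1_R⊗V_P) ρ_{RA} (1_R⊗V_P†) satisfies I^{R:B}(ς_{RBE}) = I^{R:E}(ς_{RBE}). -/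
set_option synthInstance.maxHeartbeats 100000
set_option maxHeartbeats 600000



open Matrix BigOperators
open scoped Kronecker ComplexOrder

noncomputable section Aux
open Polynomial


lemma det_smul_one_sub {F : Type*} [Field F] {k : Type*} [Fintype k] [DecidableEq k]
    {x : F} (hx : x ≠ 0) (Z : Matrix k k F) :
    det (x • (1 : Matrix k k F) - Z) = x ^ (Fintype.card k) * det (1 - x⁻¹ • Z) := by
  rw [← det_smul, smul_sub, smul_smul, mul_inv_cancel₀ hx, one_smul]

lemma det_key {F : Type*} [Field F] {m n : Type*} [Fintype m] [DecidableEq m] [Fintype n]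
    [DecidableEq n] {x : F} (hx : x ≠ 0) (L : Matrix m n F) (M : Matrix n m F) (hLM : M * L = 1)
    (D : Matrix n n F) :
    det (x • 1 - L * D * M) * x ^ (Fintype.card n) = det (x • 1 - D) * x ^ (Fintype.card m) := by
  rw [det_smul_one_sub hx, det_smul_one_sub hx]
  have : (1 : Matrix m m F) - x⁻¹ • (L * D * M) = 1 - L * ((x⁻¹ • D) * M) := by
    simp only [Matrix.mul_smul, Matrix.smul_mul, Matrix.mul_assoc]
  rw [this, det_one_sub_mul_comm, Matrix.mul_assoc, hLM, Matrix.mul_one]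
  ring

lemma charpoly_algebraMap {K : Type*} [Field K] {k : Type*} [Fintype k] [DecidableEq k]
    (Z : Matrix k k K) :
    algebraMap K[X] (RatFunc K) Z.charpoly =
      det ((RatFunc.X : RatFunc K) • (1 : Matrix k k (RatFunc K)) -
        Z.map (algebraMap K (RatFunc K))) := by
  rw [Matrix.charpoly, RingHom.map_det]
  congr 1
  ext i j
  by_cases h : i = j
  · subst h
    simp [charmatrix_apply_eq, RatFunc.algebraMap_X, ← RatFunc.algebraMap_C,
      Matrix.one_apply, RingHom.mapMatrix_apply, Matrix.map_apply, IsScalarTower.algebraMap_apply]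
  · simp [charmatrix_apply_ne _ _ _ h, ← RatFunc.algebraMap_C, Matrix.one_apply, h,
      RingHom.mapMatrix_apply, Matrix.map_apply]

lemma charpoly_key {K : Type*} [Field K] {m n : Type*} [Fintype m] [DecidableEq m] [Fintype n]
    [DecidableEq n] (L : Matrix m n K) (M : Matrix n m K) (hLM : M * L = 1) (D : Matrix n n K) :
    (L * D * M).charpoly * X ^ (Fintype.card n) = D.charpoly * X ^ (Fintype.card m) := by
  apply RatFunc.algebraMap_injective K
  have hx : (RatFunc.X : RatFunc K) ≠ 0 := RatFunc.X_ne_zero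
  simp only [_root_.map_mul, map_pow, RatFunc.algebraMap_X, charpoly_algebraMap]
  have h1 : (L * D * M).map (algebraMap K (RatFunc K)) =
      L.map (algebraMap K (RatFunc K)) * D.map (algebraMap K (RatFunc K)) *
        M.map (algebraMap K (RatFunc K)) := by
    rw [Matrix.map_mul, Matrix.map_mul]
  have h2 : M.map (algebraMap K (RatFunc K)) * L.map (algebraMap K (RatFunc K)) = 1 := by
    rw [← Matrix.map_mul, hLM, Matrix.map_one _ (map_zero _) (map_one _)]
  rw [h1]
  exact det_key hx _ _ h2 _

lemma charpoly_diagonal' {K : Type*} [Field K] {n : Type*} [Fintype n] [DecidableEq n]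
    (v : n → K) : (diagonal v).charpoly = ∏ i, (X - C (v i)) := by
  rw [Matrix.charpoly]
  have : charmatrix (diagonal v) = diagonal (fun i => (X : K[X]) - C (v i)) := by
    ext i j
    by_cases h : i = j
    · subst h; simp [charmatrix_apply_eq]
    · simp [charmatrix_apply_ne _ _ _ h, diagonal_apply_ne _ h]
  rw [this, det_diagonal]

lemma charpoly_hermitian {n : Type*} [Fintype n] [DecidableEq n] {A : Matrix n n ℂ}
    (hA : A.IsHermitian) : A.charpoly = ∏ i, (X - C ((hA.eigenvalues i : ℂ))) := by
  have hU : (star (hA.eigenvectorUnitary : Matrix n n ℂ)) * (hA.eigenvectorUnitary : Matrix n n ℂ)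
      = 1 := (Unitary.mem_iff.mp hA.eigenvectorUnitary.2).1
  have key := charpoly_key (hA.eigenvectorUnitary : Matrix n n ℂ)
      (star (hA.eigenvectorUnitary : Matrix n n ℂ)) hU
      (diagonal (RCLike.ofReal ∘ hA.eigenvalues))
  rw [← Unitary.conjStarAlgAut_apply (S := ℂ), ← hA.spectral_theorem] at key
  have hXn : (X : ℂ[X]) ^ (Fintype.card n) ≠ 0 := pow_ne_zero _ X_ne_zero
  have := mul_right_cancel₀ hXn key
  rw [this, charpoly_diagonal']
  rfl

lemma roots_prod_eigs {k : Type*} [Fintype k] (e : k → ℂ) :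
    (∏ i, (X - C (e i))).roots = Finset.univ.val.map e := by
  conv_lhs => rw [show (∏ i, (X - C (e i))) = ((Finset.univ.val.map e).map
    (fun a => X - C a)).prod by rw [Multiset.map_map]; rfl]
  exact roots_multiset_prod_X_sub_C _

lemma eig_multiset_conj {m n : Type*} [Fintype m] [DecidableEq m] [Fintype n] [DecidableEq n]
    (K : Matrix m n ℂ) (hK : Kᴴ * K = 1) {A : Matrix n n ℂ} (hA : A.IsHermitian)
    (hB : (K * A * Kᴴ).IsHermitian) :
    Finset.univ.val.map (fun i => (hB.eigenvalues i : ℂ)) + Multiset.replicate (Fintype.card n) 0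
      = Finset.univ.val.map (fun i => (hA.eigenvalues i : ℂ)) +
        Multiset.replicate (Fintype.card m) 0 := by
  have hchar := charpoly_key K Kᴴ hK A
  rw [charpoly_hermitian hB, charpoly_hermitian hA] at hchar
  have hpB : (∏ i, (X - C ((hB.eigenvalues i : ℂ)))) ≠ 0 :=
    (monic_prod_of_monic _ _ (fun i _ => monic_X_sub_C _)).ne_zero
  have hpA : (∏ i, (X - C ((hA.eigenvalues i : ℂ)))) ≠ 0 :=
    (monic_prod_of_monic _ _ (fun i _ => monic_X_sub_C _)).ne_zero
  have hXn : ∀ k : ℕ, ((X : ℂ[X]) ^ k) ≠ 0 := fun k => pow_ne_zero _ X_ne_zero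
  have hroots := congrArg Polynomial.roots hchar
  rw [roots_mul (mul_ne_zero hpB (hXn _)), roots_mul (mul_ne_zero hpA (hXn _)),
    roots_pow, roots_pow, roots_X, roots_prod_eigs, roots_prod_eigs,
    Multiset.nsmul_singleton, Multiset.nsmul_singleton] at hroots
  exact hroots

end Aux


lemma sum_f_eq {k : Type*} [Fintype k] (e : k → ℝ) :
    ((Finset.univ.val.map (fun i => ((e i : ℂ)))).map
        (fun z : ℂ => z.re * Real.logb 2 z.re)).sum
      = ∑ i, e i * Real.logb 2 (e i) := by
  rw [Multiset.map_map]
  simp only [Function.comp_def, Complex.ofReal_re]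
  rfl

lemma vnEntropy_conj {m n : Type*} [Fintype m] [DecidableEq m] [Fintype n] [DecidableEq n]
    (K : Matrix m n ℂ) (hK : Kᴴ * K = 1) {A : Matrix n n ℂ} (hA : A.IsHermitian) :
    vnEntropy (K * A * Kᴴ) = vnEntropy A := by
  have hB : (K * A * Kᴴ).IsHermitian := Matrix.isHermitian_mul_mul_conjTranspose K hA
  rw [vnEntropy, vnEntropy, dif_pos hB, dif_pos hA]
  refine neg_inj.mpr ?_
  have hms := eig_multiset_conj K hK hA hB
  have hsum := congrArg
    (fun s : Multiset ℂ => (s.map (fun z : ℂ => z.re * Real.logb 2 z.re)).sum) hms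
  simp only [Multiset.map_add, Multiset.sum_add, Multiset.map_replicate, Complex.zero_re,
    zero_mul, Multiset.sum_replicate, smul_eq_mul] at hsum
  rw [sum_f_eq, sum_f_eq] at hsum
  simpa using hsum


noncomputable section Aux2
open scoped Kronecker

variable {R B E I : Type*} [Fintype R] [DecidableEq R] [Fintype B] [DecidableEq B]
  [Fintype E] [DecidableEq E] [Fintype I] [DecidableEq I]

lemma kronT {m n p q : Type*} (A : Matrix m n ℂ) (Bm : Matrix p q ℂ) :
    (A ⊗ₖ Bm)ᴴ = Aᴴ ⊗ₖ Bmᴴ := by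
  ext ⟨i, j⟩ ⟨k, l⟩
  simp [Matrix.conjTranspose_apply, Matrix.kroneckerMap_apply, mul_comm]

lemma kron_one_isometry (W : Matrix B I ℂ) (hW : Wᴴ * W = 1) :
    ((1 : Matrix R R ℂ) ⊗ₖ W)ᴴ * ((1 : Matrix R R ℂ) ⊗ₖ W) = 1 := by
  rw [kronT, Matrix.conjTranspose_one, ← Matrix.mul_kronecker_mul, hW, Matrix.one_mul,
    Matrix.one_kronecker_one]

lemma conj_entry (W : Matrix B I ℂ) (Q : Matrix (R × I) (R × I) ℂ) (r r' : R) (b b' : B) :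
    ((((1 : Matrix R R ℂ) ⊗ₖ W) * Q * ((1 : Matrix R R ℂ) ⊗ₖ W)ᴴ)) (r, b) (r', b') =
      ∑ m, ∑ m', W b m * Q (r, m) (r', m') * star (W b' m') := by
  simp [Matrix.mul_apply, Matrix.conjTranspose_apply, Matrix.kroneckerMap_apply,
    Matrix.one_apply, Fintype.sum_prod_type, ite_mul, mul_ite, apply_ite star,
    Finset.sum_ite_eq, Finset.sum_ite_eq', Finset.sum_mul, Finset.mul_sum, mul_assoc]
  rw [Finset.sum_comm]

lemma ptrace1_conj (W : Matrix B I ℂ) (Q : Matrix (R × I) (R × I) ℂ) :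
    ptrace1 (((1 : Matrix R R ℂ) ⊗ₖ W) * Q * ((1 : Matrix R R ℂ) ⊗ₖ W)ᴴ) =
      W * ptrace1 Q * Wᴴ := by
  ext b b'
  show (∑ r, ((((1 : Matrix R R ℂ) ⊗ₖ W) * Q * ((1 : Matrix R R ℂ) ⊗ₖ W)ᴴ)) (r, b) (r, b')) = _
  simp only [conj_entry]
  rw [Finset.sum_comm]
  simp only [Matrix.mul_apply, Matrix.conjTranspose_apply, ptrace1, Matrix.of_apply,
    Finset.sum_mul, Finset.mul_sum]
  conv_rhs => rw [Finset.sum_comm]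
  refine Finset.sum_congr rfl fun m _ => ?_
  rw [Finset.sum_comm]

lemma ptrace2_conj (W : Matrix B I ℂ) (hW : Wᴴ * W = 1) (Q : Matrix (R × I) (R × I) ℂ) :
    ptrace2 (((1 : Matrix R R ℂ) ⊗ₖ W) * Q * ((1 : Matrix R R ℂ) ⊗ₖ W)ᴴ) = ptrace2 Q := by
  have hW' : ∀ m m' : I, (∑ b, star (W b m') * W b m) = if m' = m then 1 else 0 := by
    intro m m'
    have := congrFun (congrFun hW m') m
    simpa [Matrix.mul_apply, Matrix.conjTranspose_apply, Matrix.one_apply] using this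
  ext r r'
  show (∑ b, ((((1 : Matrix R R ℂ) ⊗ₖ W) * Q * ((1 : Matrix R R ℂ) ⊗ₖ W)ᴴ)) (r, b) (r', b)) = _
  simp only [conj_entry]
  rw [Finset.sum_comm]
  show _ = ∑ m, Q (r, m) (r', m)
  refine Finset.sum_congr rfl fun m _ => ?_
  rw [Finset.sum_comm]
  have : ∀ m' : I, (∑ b, W b m * Q (r, m) (r', m') * star (W b m')) =
      (if m' = m then 1 else 0) * Q (r, m) (r', m') := by
    intro m'
    rw [← hW' m m', Finset.sum_mul]
    exact Finset.sum_congr rfl fun bb _ => by ring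
  simp only [this, ite_mul, one_mul, zero_mul, Finset.sum_ite_eq, Finset.sum_ite_eq', Finset.mem_univ, if_true]

lemma mRB_conj (W : Matrix B I ℂ) (U : Matrix E I ℂ)
    (hU : ∀ m m' : I, ∑ e, U e m * star (U e m') = if m = m' then 1 else 0)
    (Q : Matrix (R × I) (R × I) ℂ) :
    mRB (((1 : Matrix R R ℂ) ⊗ₖ (Matrix.of fun (x : B × E) m => W x.1 m * U x.2 m)) * Q *
        ((1 : Matrix R R ℂ) ⊗ₖ (Matrix.of fun (x : B × E) m => W x.1 m * U x.2 m))ᴴ) =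
      ((1 : Matrix R R ℂ) ⊗ₖ W) *
        (Matrix.of fun x y : R × I => if x.2 = y.2 then Q x y else 0) *
        ((1 : Matrix R R ℂ) ⊗ₖ W)ᴴ := by
  ext ⟨r, b⟩ ⟨r', b'⟩
  show (∑ e, (((1 : Matrix R R ℂ) ⊗ₖ (Matrix.of fun (x : B × E) m => W x.1 m * U x.2 m)) * Q *
      ((1 : Matrix R R ℂ) ⊗ₖ (Matrix.of fun (x : B × E) m => W x.1 m * U x.2 m))ᴴ)
        (r, (b, e)) (r', (b', e))) = _
  simp only [conj_entry, Matrix.of_apply]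
  rw [Finset.sum_comm]
  refine Finset.sum_congr rfl fun m _ => ?_
  rw [Finset.sum_comm]
  refine Finset.sum_congr rfl fun m' _ => ?_
  have : (∑ e, (W b m * U e m) * Q (r, m) (r', m') * star (W b' m' * U e m')) =
      (∑ e, U e m * star (U e m')) * (W b m * Q (r, m) (r', m') * star (W b' m')) := by
    rw [Finset.sum_mul]
    refine Finset.sum_congr rfl fun e _ => ?_
    simp only [star_mul']
    ring
  rw [this, hU]
  by_cases h : m = m' <;> simp [h]

lemma mRE_conj (W : Matrix B I ℂ) (U : Matrix E I ℂ)
    (hW : ∀ m m' : I, ∑ b, W b m * star (W b m') = if m = m' then 1 else 0)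
    (Q : Matrix (R × I) (R × I) ℂ) :
    mRE (((1 : Matrix R R ℂ) ⊗ₖ (Matrix.of fun (x : B × E) m => W x.1 m * U x.2 m)) * Q *
        ((1 : Matrix R R ℂ) ⊗ₖ (Matrix.of fun (x : B × E) m => W x.1 m * U x.2 m))ᴴ) =
      ((1 : Matrix R R ℂ) ⊗ₖ U) *
        (Matrix.of fun x y : R × I => if x.2 = y.2 then Q x y else 0) *
        ((1 : Matrix R R ℂ) ⊗ₖ U)ᴴ := by
  ext ⟨r, e⟩ ⟨r', e'⟩
  show (∑ b, (((1 : Matrix R R ℂ) ⊗ₖ (Matrix.of fun (x : B × E) m => W x.1 m * U x.2 m)) * Q *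
      ((1 : Matrix R R ℂ) ⊗ₖ (Matrix.of fun (x : B × E) m => W x.1 m * U x.2 m))ᴴ)
        (r, (b, e)) (r', (b, e'))) = _
  simp only [conj_entry, Matrix.of_apply]
  rw [Finset.sum_comm]
  refine Finset.sum_congr rfl fun m _ => ?_
  rw [Finset.sum_comm]
  refine Finset.sum_congr rfl fun m' _ => ?_
  have : (∑ b, (W b m * U e m) * Q (r, m) (r', m') * star (W b m' * U e' m')) =
      (∑ b, W b m * star (W b m')) * (U e m * Q (r, m) (r', m') * star (U e' m')) := by
    rw [Finset.sum_mul]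
    refine Finset.sum_congr rfl fun b _ => ?_
    simp only [star_mul']
    ring
  rw [this, hW]
  by_cases h : m = m' <;> simp [h]

lemma ptrace1_isHermitian {A B' : Type*} [Fintype A] (Q : Matrix (A × B') (A × B') ℂ)
    (hQ : Q.IsHermitian) : (ptrace1 Q).IsHermitian := by
  ext i j
  rw [Matrix.conjTranspose_apply]
  simp only [ptrace1, Matrix.of_apply, star_sum]
  refine Finset.sum_congr rfl fun k _ => ?_
  have h := congrFun (congrFun hQ (k, i)) (k, j)
  rw [Matrix.conjTranspose_apply] at h
  exact h

lemma pinch_isHermitian {A B' : Type*} [DecidableEq B'] (Q : Matrix (A × B') (A × B') ℂ)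
    (hQ : Q.IsHermitian) :
    (Matrix.of fun x y : A × B' => if x.2 = y.2 then Q x y else 0).IsHermitian := by
  ext x y
  rw [Matrix.conjTranspose_apply, Matrix.of_apply, Matrix.of_apply]
  have h2 := congrFun (congrFun hQ x) y
  rw [Matrix.conjTranspose_apply] at h2
  by_cases h : x.2 = y.2
  · rw [if_pos h.symm, if_pos h, h2]
  · rw [if_neg (Ne.symm h), if_neg h, star_zero]

end Aux2

/-- If `{|φᵐ_A⟩}` is a rank-one POVM (`∑ₘ |φᵐ⟩⟨φᵐ| = 1_A`) and
`{|m_B⟩}`, `{|m_E⟩}` are orthonormal families, then `V_P = ∑ₘ (|m_B⟩ ⊗ |m_E⟩)⟨φᵐ_A|` is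
an isometry and for every state `ρ_{RA}` the output `ς = (1_R ⊗ V_P) ρ (1_R ⊗ V_P)†`
satisfies `I^{R:B}(ς) = I^{R:E}(ς)`. -/
theorem rank_one_povm_isometry_balances_mutInfo
    {dR dA dB dE ι : Type*} [Fintype dR] [DecidableEq dR] [Fintype dA] [DecidableEq dA]
    [Fintype dB] [DecidableEq dB] [Fintype dE] [DecidableEq dE] [Fintype ι] [DecidableEq ι]
    (φ : ι → dA → ℂ)
    (hφ : ∑ m, Matrix.vecMulVec (φ m) (star (φ m)) = (1 : Matrix dA dA ℂ))
    (mB : ι → dB → ℂ)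
    (hmB : ∀ i j, ∑ k, star (mB i k) * mB j k = if i = j then 1 else 0)
    (mE : ι → dE → ℂ)
    (hmE : ∀ i j, ∑ k, star (mE i k) * mE j k = if i = j then 1 else 0)
    (V : Matrix (dB × dE) dA ℂ)
    (hV : V = Matrix.of fun x a => ∑ m, mB m x.1 * mE m x.2 * star (φ m a)) :
    Vᴴ * V = 1 ∧
    ∀ ρ : Matrix (dR × dA) (dR × dA) ℂ, IsState ρ →
      mutInfo (mRB (((1 : Matrix dR dR ℂ) ⊗ₖ V) * ρ * ((1 : Matrix dR dR ℂ) ⊗ₖ V)ᴴ)) =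
      mutInfo (mRE (((1 : Matrix dR dR ℂ) ⊗ₖ V) * ρ * ((1 : Matrix dR dR ℂ) ⊗ₖ V)ᴴ)) := by
  set MB : Matrix dB ι ℂ := Matrix.of fun b m => mB m b with hMBdef
  set ME : Matrix dE ι ℂ := Matrix.of fun e m => mE m e with hMEdef
  set N : Matrix (dB × dE) ι ℂ := Matrix.of fun x m => MB x.1 m * ME x.2 m with hNdef
  set Φt : Matrix ι dA ℂ := Matrix.of fun m a => star (φ m a) with hΦdef
  have hVfact : V = N * Φt := by
    ext x a
    rw [hV]
    simp [Matrix.mul_apply, hNdef, hMBdef, hMEdef, hΦdef, mul_assoc]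
  -- orthonormality in matrix form
  have hMB : MBᴴ * MB = 1 := by
    ext m m'
    simpa [Matrix.mul_apply, Matrix.conjTranspose_apply, Matrix.one_apply, hMBdef]
      using hmB m m'
  have hME : MEᴴ * ME = 1 := by
    ext m m'
    simpa [Matrix.mul_apply, Matrix.conjTranspose_apply, Matrix.one_apply, hMEdef]
      using hmE m m'
  have hNN : Nᴴ * N = 1 := by
    ext m m'
    show (∑ x : dB × dE, star (N x m) * N x m') = (1 : Matrix ι ι ℂ) m m'
    rw [Fintype.sum_prod_type]
    have : (∑ b, ∑ e, star (N (b, e) m) * N (b, e) m') =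
        (∑ b, star (mB m b) * mB m' b) * (∑ e, star (mE m e) * mE m' e) := by
      rw [Finset.sum_mul_sum]
      refine Finset.sum_congr rfl fun b _ => Finset.sum_congr rfl fun e _ => ?_
      simp only [hNdef, hMBdef, hMEdef, Matrix.of_apply, star_mul']
      ring
    rw [this, hmB, hmE, Matrix.one_apply]
    by_cases h : m = m' <;> simp [h]
  have hΦ : Φtᴴ * Φt = 1 := by
    ext a a'
    have h := congrFun (congrFun hφ a) a'
    simp only [Matrix.sum_apply, Matrix.vecMulVec_apply, Pi.star_apply] at h
    simpa [Matrix.mul_apply, Matrix.conjTranspose_apply, hΦdef, mul_comm] using h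
  constructor
  · rw [hVfact, Matrix.conjTranspose_mul, Matrix.mul_assoc,
      ← Matrix.mul_assoc Nᴴ N Φt, hNN, Matrix.one_mul, hΦ]
  · intro ρ hρ
    have hρH : ρ.IsHermitian := hρ.1.isHermitian
    set G : Matrix (dR × ι) (dR × dA) ℂ := (1 : Matrix dR dR ℂ) ⊗ₖ Φt with hGdef
    set Q : Matrix (dR × ι) (dR × ι) ℂ := G * ρ * Gᴴ with hQdef
    have hQ : Q.IsHermitian := Matrix.isHermitian_mul_mul_conjTranspose G hρH
    set Qp : Matrix (dR × ι) (dR × ι) ℂ :=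
      Matrix.of fun x y : dR × ι => if x.2 = y.2 then Q x y else 0 with hQpdef
    have hQp : Qp.IsHermitian := pinch_isHermitian Q hQ
    have hPQp : (ptrace1 Qp).IsHermitian := ptrace1_isHermitian Qp hQp
    have h1V : ((1 : Matrix dR dR ℂ) ⊗ₖ V) = ((1 : Matrix dR dR ℂ) ⊗ₖ N) * G := by
      rw [hVfact, hGdef, ← Matrix.mul_kronecker_mul, Matrix.one_mul]
    have hςeq : ((1 : Matrix dR dR ℂ) ⊗ₖ V) * ρ * ((1 : Matrix dR dR ℂ) ⊗ₖ V)ᴴ =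
        ((1 : Matrix dR dR ℂ) ⊗ₖ N) * Q * ((1 : Matrix dR dR ℂ) ⊗ₖ N)ᴴ := by
      rw [h1V, Matrix.conjTranspose_mul, hQdef]
      simp only [Matrix.mul_assoc]
    have hUE : ∀ m m' : ι, (∑ e, ME e m * star (ME e m')) = if m = m' then 1 else 0 := by
      intro m m'
      have h := congrArg star (hmE m m')
      simpa [star_sum, star_mul', hMEdef, mul_comm] using h
    have hUB : ∀ m m' : ι, (∑ b, MB b m * star (MB b m')) = if m = m' then 1 else 0 := by
      intro m m'
      have h := congrArg star (hmB m m')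
      simpa [star_sum, star_mul', hMBdef, mul_comm] using h
    have hmRBe : mRB (((1 : Matrix dR dR ℂ) ⊗ₖ V) * ρ * ((1 : Matrix dR dR ℂ) ⊗ₖ V)ᴴ) =
        ((1 : Matrix dR dR ℂ) ⊗ₖ MB) * Qp * ((1 : Matrix dR dR ℂ) ⊗ₖ MB)ᴴ := by
      rw [hςeq, hNdef]
      exact mRB_conj MB ME hUE Q
    have hmREe : mRE (((1 : Matrix dR dR ℂ) ⊗ₖ V) * ρ * ((1 : Matrix dR dR ℂ) ⊗ₖ V)ᴴ) =
        ((1 : Matrix dR dR ℂ) ⊗ₖ ME) * Qp * ((1 : Matrix dR dR ℂ) ⊗ₖ ME)ᴴ := by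
      rw [hςeq, hNdef]
      exact mRE_conj MB ME hUB Q
    rw [mutInfo, mutInfo, hmRBe, hmREe, ptrace2_conj MB hMB Qp, ptrace2_conj ME hME Qp,
      ptrace1_conj MB Qp, ptrace1_conj ME Qp,
      vnEntropy_conj ((1 : Matrix dR dR ℂ) ⊗ₖ MB) (kron_one_isometry MB hMB) hQp,
      vnEntropy_conj ((1 : Matrix dR dR ℂ) ⊗ₖ ME) (kron_one_isometry ME hME) hQp,
      vnEntropy_conj MB hMB hPQp, vnEntropy_conj ME hME hPQp]
end

section
/- For every bipartite pure state |Ψ_RA⟩ on H_R⊗H_A, the advantage-preserving ineliminable correlations equal the entropy of entanglement: Ξ_A(Ψ_RA) = S(ρ_R), where ρ_R := Tr_A[Ψ_RA]. -/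
open Matrix BigOperators
open scoped Kronecker ComplexOrder

section Aux
open Matrix Polynomial BigOperators
open scoped Kronecker
set_option maxRecDepth 10000

variable {α β : Type*} [Fintype α] [DecidableEq α] [Fintype β] [DecidableEq β]

lemma aux_charpoly_conj (P M Q : Matrix α α ℂ) (h : P * Q = 1) :
    (P * M * Q).charpoly = M.charpoly := by
  have h' : P.map (C : ℂ →+* ℂ[X]) * Q.map C = 1 := by
    rw [← Matrix.map_mul, h, Matrix.map_one _ (map_zero _) (map_one _)]
  have hc : charmatrix (P * M * Q) = P.map C * charmatrix M * Q.map C := by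
    unfold charmatrix
    rw [RingHom.mapMatrix_apply, RingHom.mapMatrix_apply, Matrix.mul_sub, Matrix.sub_mul]
    congr 1
    · rw [mul_assoc, scalar_commute X (fun r => Commute.all X r) (Q.map C), ← mul_assoc, h',
        one_mul]
    · rw [Matrix.map_mul, Matrix.map_mul]
  rw [charpoly, charpoly, hc, det_mul, det_mul, mul_comm (P.map C).det, mul_assoc,
    ← det_mul, h', det_one, mul_one]

lemma aux_charpoly_diagonal_s17 (d : α → ℂ) :
    (diagonal d).charpoly = ∏ i, (X - C (d i)) := by
  have : charmatrix (diagonal d) = diagonal (fun i => X - C (d i)) := by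
    ext i j
    by_cases hij : i = j
    · subst hij; simp [charmatrix_apply_eq]
    · rw [charmatrix_apply_ne _ _ _ hij, diagonal_apply_ne _ hij, diagonal_apply_ne _ hij]
      simp
  rw [charpoly, this, det_diagonal]

lemma aux_charpoly_hermitian {A : Matrix α α ℂ} (hA : A.IsHermitian) :
    A.charpoly = ∏ i, (X - C ((hA.eigenvalues i : ℂ))) := by
  conv_lhs => rw [hA.spectral_theorem, Unitary.conjStarAlgAut_apply]
  rw [aux_charpoly_conj _ _ _ (by
    simpa using (Matrix.mem_unitaryGroup_iff).mp (hA.eigenvectorUnitary).2),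
    aux_charpoly_diagonal_s17]
  rfl

lemma aux_charpoly_transpose (A : Matrix α α ℂ) : Aᵀ.charpoly = A.charpoly := by
  rw [charpoly, charpoly]
  have : charmatrix Aᵀ = (charmatrix A)ᵀ := by
    unfold charmatrix
    rw [RingHom.mapMatrix_apply, RingHom.mapMatrix_apply, transpose_sub, transpose_map]
    congr 1
    unfold Matrix.scalar
    simp
  rw [this, det_transpose]

lemma aux_charpoly_mul_comm (A : Matrix α β ℂ) (B : Matrix β α ℂ) :
    (A * B).charpoly * X ^ (Fintype.card β) = (B * A).charpoly * X ^ (Fintype.card α) := by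
  classical
  set A' := A.map (C : ℂ →+* ℂ[X]) with hA'
  set B' := B.map (C : ℂ →+* ℂ[X]) with hB'
  set P : Matrix (α ⊕ β) (α ⊕ β) ℂ[X] := fromBlocks (Matrix.scalar α X) A' B' 1 with hP
  set Q : Matrix (α ⊕ β) (α ⊕ β) ℂ[X] := fromBlocks 1 0 (-B') (Matrix.scalar β X) with hQ
  have hXdetα : (Matrix.scalar α (X : ℂ[X])).det = X ^ (Fintype.card α) := by
    rw [Matrix.scalar_apply, det_diagonal]; simp [Finset.prod_const, Finset.card_univ]
  have hXdetβ : (Matrix.scalar β (X : ℂ[X])).det = X ^ (Fintype.card β) := by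
    rw [Matrix.scalar_apply, det_diagonal]; simp [Finset.prod_const, Finset.card_univ]
  have hchmα : ∀ (M : Matrix α α ℂ), charmatrix M = Matrix.scalar α X - M.map C := by
    intro M; unfold charmatrix; rw [RingHom.mapMatrix_apply]
  have hchmβ : ∀ (M : Matrix β β ℂ), charmatrix M = Matrix.scalar β X - M.map C := by
    intro M; unfold charmatrix; rw [RingHom.mapMatrix_apply]
  have hcomm : (Matrix.scalar β (X : ℂ[X])) * B' = B' * (Matrix.scalar α (X : ℂ[X])) := by
    ext i j
    simp [Matrix.scalar_apply, Matrix.diagonal_mul, Matrix.mul_diagonal, mul_comm]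
  have hPQ : P * Q = fromBlocks (charmatrix (A * B)) (A' * Matrix.scalar β X) 0
      (Matrix.scalar β X) := by
    rw [hP, hQ, fromBlocks_multiply, hchmα, Matrix.map_mul, sub_eq_add_neg]
    simp only [Matrix.mul_one, Matrix.one_mul, Matrix.mul_zero, Matrix.zero_mul,
      Matrix.mul_neg, Matrix.neg_mul, zero_add, add_zero, add_neg_cancel]
    rfl
  have hQP : Q * P = fromBlocks (Matrix.scalar α X) A' 0 (charmatrix (B * A)) := by
    rw [hP, hQ, fromBlocks_multiply, hchmβ, Matrix.map_mul, sub_eq_add_neg]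
    simp only [Matrix.mul_one, Matrix.one_mul, Matrix.mul_zero, Matrix.zero_mul,
      Matrix.mul_neg, Matrix.neg_mul, zero_add, add_zero, hcomm, neg_add_cancel, add_neg_cancel, add_comm]
    rfl
  have hdet : (P * Q).det = (Q * P).det := by rw [det_mul, det_mul, mul_comm]
  rw [hPQ, hQP, det_fromBlocks_zero₂₁, det_fromBlocks_zero₂₁, hXdetα, hXdetβ] at hdet
  rw [charpoly, charpoly, hdet, mul_comm]

lemma aux_prod_pad {γ : Type*} [Fintype γ] (g : γ → ℝ) (m : ℕ) :
    ((((Finset.univ.val.map fun i => ((g i : ℂ))) + Multiset.replicate m 0).map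
      fun a => X - C a).prod) = (∏ i, (X - C ((g i : ℂ)))) * X ^ m := by
  rw [Multiset.map_add, Multiset.prod_add, Multiset.map_replicate, Multiset.prod_replicate,
    map_zero, sub_zero, Multiset.map_map, Finset.prod_eq_multiset_prod]
  rfl

lemma aux_sum_pad {γ : Type*} [Fintype γ] (f : ℝ → ℝ) (hf : f 0 = 0) (g : γ → ℝ) (m : ℕ) :
    ((((Finset.univ.val.map fun i => ((g i : ℂ))) + Multiset.replicate m 0).map
      fun (z : ℂ) => f z.re).sum) = ∑ i, f (g i) := by
  rw [Multiset.map_add, Multiset.sum_add, Multiset.map_replicate, Multiset.sum_replicate,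
    Multiset.map_map, Finset.sum_eq_multiset_sum]
  have : ((fun (z : ℂ) => f z.re) ∘ fun i => ((g i : ℂ))) = fun i => f (g i) := by
    funext i; simp
  rw [this, Complex.zero_re, hf, smul_zero, add_zero]

lemma aux_sum_f_eig {A : Matrix α α ℂ} {B : Matrix β β ℂ} (hA : A.IsHermitian)
    (hB : B.IsHermitian) (f : ℝ → ℝ) (hf : f 0 = 0)
    (h : A.charpoly * X ^ (Fintype.card β) = B.charpoly * X ^ (Fintype.card α)) :
    ∑ i, f (hA.eigenvalues i) = ∑ j, f (hB.eigenvalues j) := by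
  classical
  have hpA := aux_prod_pad hA.eigenvalues (Fintype.card β)
  have hpB := aux_prod_pad hB.eigenvalues (Fintype.card α)
  rw [← aux_charpoly_hermitian hA] at hpA
  rw [← aux_charpoly_hermitian hB] at hpB
  have hs := congrArg Polynomial.roots (hpA.trans (h.trans hpB.symm))
  rw [Polynomial.roots_multiset_prod_X_sub_C, Polynomial.roots_multiset_prod_X_sub_C] at hs
  have h3 := congrArg (fun s : Multiset ℂ => (s.map fun (z : ℂ) => f z.re).sum) hs
  rw [aux_sum_pad f hf, aux_sum_pad f hf] at h3
  exact h3


noncomputable section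

lemma aux_vnEntropy_eq_of_charpoly {A : Matrix α α ℂ} {B : Matrix β β ℂ}
    (hA : A.IsHermitian) (hB : B.IsHermitian)
    (h : A.charpoly * X ^ (Fintype.card β) = B.charpoly * X ^ (Fintype.card α)) :
    vnEntropy A = vnEntropy B := by
  rw [vnEntropy, vnEntropy, dif_pos hA, dif_pos hB, neg_inj]
  exact aux_sum_f_eig hA hB (fun x => x * Real.logb 2 x) (by simp) h

lemma aux_vnEntropy_mul_conjTranspose (M : Matrix α β ℂ) :
    vnEntropy (M * Mᴴ) = vnEntropy (Mᴴ * M) :=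
  aux_vnEntropy_eq_of_charpoly (isHermitian_mul_conjTranspose_self M)
    (isHermitian_conjTranspose_mul_self M) (aux_charpoly_mul_comm M Mᴴ)

lemma aux_vnEntropy_purity (M : Matrix α β ℂ) :
    vnEntropy (M * Mᴴ) = vnEntropy (Mᵀ * Mᵀᴴ) := by
  have h1 : Mᵀ * Mᵀᴴ = (Mᴴ * M)ᵀ := by
    ext i j
    simp [Matrix.mul_apply, Matrix.conjTranspose_apply, mul_comm]
  rw [aux_vnEntropy_mul_conjTranspose, h1]
  exact aux_vnEntropy_eq_of_charpoly (isHermitian_conjTranspose_mul_self M)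
    ((isHermitian_conjTranspose_mul_self M).transpose)
    (by rw [aux_charpoly_transpose])

variable {dR dA : Type*} [Fintype dR] [DecidableEq dR] [Fintype dA] [DecidableEq dA]
variable {b e : ℕ}

lemma aux_conj_vecMulVec {m n : Type*} [Fintype m] [Fintype n] (A : Matrix m n ℂ) (v : n → ℂ) :
    A * Matrix.vecMulVec v (star v) * Aᴴ = Matrix.vecMulVec (A *ᵥ v) (star (A *ᵥ v)) := by
  ext i j
  simp only [Matrix.mul_apply, Matrix.vecMulVec_apply, Matrix.conjTranspose_apply,
    Matrix.mulVec, dotProduct, Pi.star_apply, star_sum, star_mul',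
    Finset.sum_mul, Finset.mul_sum]
  exact Finset.sum_congr rfl fun z _ => Finset.sum_congr rfl fun y _ => by ring

lemma aux_mulVec_kron (V : Matrix (Fin b × Fin e) dA ℂ) (ψ : dR × dA → ℂ)
    (r : dR) (p : Fin b × Fin e) :
    (((1 : Matrix dR dR ℂ) ⊗ₖ V) *ᵥ ψ) (r, p) = ∑ a, V p a * ψ (r, a) := by
  simp [Matrix.mulVec, dotProduct, Matrix.kroneckerMap_apply, Matrix.one_apply,
    Fintype.sum_prod_type, ite_mul, zero_mul, one_mul, Finset.sum_ite_irrel,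
    Finset.sum_ite_eq, Finset.sum_ite_eq']

lemma aux_sum_phi (ψ : dR × dA → ℂ) (V : Matrix (Fin b × Fin e) dA ℂ) (hV : Vᴴ * V = 1)
    (r r' : dR) :
    ∑ p : Fin b × Fin e, ((((1 : Matrix dR dR ℂ) ⊗ₖ V) *ᵥ ψ) (r, p)) *
      star ((((1 : Matrix dR dR ℂ) ⊗ₖ V) *ᵥ ψ) (r', p)) = ∑ a, ψ (r, a) * star (ψ (r', a)) := by
  have hVe : ∀ a a' : dA, (∑ p : Fin b × Fin e, star (V p a') * V p a)
      = if a' = a then 1 else 0 := by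
    intro a a'
    have h2 := congrFun (congrFun hV a') a
    simpa [Matrix.mul_apply, Matrix.conjTranspose_apply, Matrix.one_apply] using h2
  calc ∑ p : Fin b × Fin e, ((((1 : Matrix dR dR ℂ) ⊗ₖ V) *ᵥ ψ) (r, p)) *
        star ((((1 : Matrix dR dR ℂ) ⊗ₖ V) *ᵥ ψ) (r', p))
      = ∑ p : Fin b × Fin e, ∑ a, ∑ a', (star (V p a') * V p a) *
          (ψ (r, a) * star (ψ (r', a'))) := by
        refine Finset.sum_congr rfl fun p _ => ?_
        rw [aux_mulVec_kron, aux_mulVec_kron, star_sum, Finset.sum_mul]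
        refine Finset.sum_congr rfl fun a _ => ?_
        rw [Finset.mul_sum]
        refine Finset.sum_congr rfl fun a' _ => ?_
        rw [star_mul']
        ring
    _ = ∑ a, ∑ a', (∑ p : Fin b × Fin e, star (V p a') * V p a) *
          (ψ (r, a) * star (ψ (r', a'))) := by
        rw [Finset.sum_comm]
        refine Finset.sum_congr rfl fun a _ => ?_
        rw [Finset.sum_comm]
        refine Finset.sum_congr rfl fun a' _ => ?_
        rw [Finset.sum_mul]
    _ = ∑ a, ∑ a', (if a' = a then (1 : ℂ) else 0) * (ψ (r, a) * star (ψ (r', a'))) := by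
        refine Finset.sum_congr rfl fun a _ => Finset.sum_congr rfl fun a' _ => ?_
        rw [hVe]
    _ = ∑ a, ψ (r, a) * star (ψ (r', a)) := by
        simp [ite_mul, Finset.sum_ite_eq, Finset.sum_ite_eq']

lemma aux_key (ψ : dR × dA → ℂ) (V : Matrix (Fin b × Fin e) dA ℂ) (hV : Vᴴ * V = 1) :
    mutInfo (mRB (((1 : Matrix dR dR ℂ) ⊗ₖ V) * (Matrix.vecMulVec ψ (star ψ)) *
        ((1 : Matrix dR dR ℂ) ⊗ₖ V)ᴴ)) +
      mutInfo (mRE (((1 : Matrix dR dR ℂ) ⊗ₖ V) * (Matrix.vecMulVec ψ (star ψ)) *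
        ((1 : Matrix dR dR ℂ) ⊗ₖ V)ᴴ)) =
      2 * vnEntropy (ptrace2 (Matrix.vecMulVec ψ (star ψ))) := by
  have hς := aux_conj_vecMulVec ((1 : Matrix dR dR ℂ) ⊗ₖ V) ψ
  set φ : dR × (Fin b × Fin e) → ℂ := ((1 : Matrix dR dR ℂ) ⊗ₖ V) *ᵥ ψ with hφdef
  rw [hς]
  set M1 : Matrix (dR × Fin b) (Fin e) ℂ := Matrix.of (fun x n => φ (x.1, (x.2, n))) with hM1
  set M2 : Matrix (dR × Fin e) (Fin b) ℂ := Matrix.of (fun x m => φ (x.1, (m, x.2))) with hM2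
  have e1 : mRB (Matrix.vecMulVec φ (star φ)) = M1 * M1ᴴ := by
    ext x y
    simp [mRB, Matrix.mul_apply, Matrix.vecMulVec_apply, Matrix.conjTranspose_apply, hM1]
  have e2 : mRE (Matrix.vecMulVec φ (star φ)) = M2 * M2ᴴ := by
    ext x y
    simp [mRE, Matrix.mul_apply, Matrix.vecMulVec_apply, Matrix.conjTranspose_apply, hM2]
  have e4 : ptrace1 (mRB (Matrix.vecMulVec φ (star φ))) = M2ᵀ * M2ᵀᴴ := by
    ext m m'
    simp [ptrace1, mRB, Matrix.mul_apply, Matrix.vecMulVec_apply, Matrix.conjTranspose_apply,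
      Matrix.transpose_apply, hM2, Fintype.sum_prod_type]
  have e5 : ptrace1 (mRE (Matrix.vecMulVec φ (star φ))) = M1ᵀ * M1ᵀᴴ := by
    ext n n'
    simp [ptrace1, mRE, Matrix.mul_apply, Matrix.vecMulVec_apply, Matrix.conjTranspose_apply,
      Matrix.transpose_apply, hM1, Fintype.sum_prod_type]
  have e3 : ptrace2 (mRB (Matrix.vecMulVec φ (star φ)))
      = ptrace2 (Matrix.vecMulVec ψ (star ψ)) := by
    ext r r'
    have := aux_sum_phi ψ V hV r r'
    rw [Fintype.sum_prod_type] at this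
    simpa [ptrace2, mRB, Matrix.vecMulVec_apply, hφdef] using this
  have e3' : ptrace2 (mRE (Matrix.vecMulVec φ (star φ)))
      = ptrace2 (Matrix.vecMulVec ψ (star ψ)) := by
    ext r r'
    have := aux_sum_phi ψ V hV r r'
    rw [Fintype.sum_prod_type, Finset.sum_comm] at this
    simpa [ptrace2, mRE, Matrix.vecMulVec_apply, hφdef] using this
  rw [mutInfo, mutInfo, e3, e3', e4, e5, e1, e2,
    aux_vnEntropy_purity M1, aux_vnEntropy_purity M2]
  ring

end
end Aux

/-- For every bipartite pure state `|Ψ_RA⟩`, the advantage-preserving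
ineliminable correlations equal the entropy of entanglement: `Ξ_A(Ψ) = S(ρ_R)`. -/
theorem xiAP_pure_state_eq_entropy_of_entanglement
    {dR dA : Type*} [Fintype dR] [DecidableEq dR] [Fintype dA] [DecidableEq dA]
    (ψ : dR × dA → ℂ) (hψ : ∑ i, Complex.normSq (ψ i) = 1) :
    XiAP (Matrix.vecMulVec ψ (star ψ))
      = vnEntropy (ptrace2 (Matrix.vecMulVec ψ (star ψ))) := by
  classical
  unfold XiAP
  set c := vnEntropy (ptrace2 (Matrix.vecMulVec ψ (star ψ))) with hc
  have hlb : ∀ x ∈ { x : ℝ | ∃ (b e : ℕ) (V : Matrix (Fin b × Fin e) dA ℂ), Vᴴ * V = 1 ∧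
      mutInfo (mRE (((1 : Matrix dR dR ℂ) ⊗ₖ V) * (Matrix.vecMulVec ψ (star ψ)) *
        ((1 : Matrix dR dR ℂ) ⊗ₖ V)ᴴ)) ≤
      mutInfo (mRB (((1 : Matrix dR dR ℂ) ⊗ₖ V) * (Matrix.vecMulVec ψ (star ψ)) *
        ((1 : Matrix dR dR ℂ) ⊗ₖ V)ᴴ)) ∧
      x = mutInfo (mRB (((1 : Matrix dR dR ℂ) ⊗ₖ V) * (Matrix.vecMulVec ψ (star ψ)) *
        ((1 : Matrix dR dR ℂ) ⊗ₖ V)ᴴ)) }, c ≤ x := by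
    rintro x ⟨b, e, V, hV, hle, rfl⟩
    have hk := aux_key ψ V hV
    rw [← hc] at hk
    linarith
  have hmem : c ∈ { x : ℝ | ∃ (b e : ℕ) (V : Matrix (Fin b × Fin e) dA ℂ), Vᴴ * V = 1 ∧
      mutInfo (mRE (((1 : Matrix dR dR ℂ) ⊗ₖ V) * (Matrix.vecMulVec ψ (star ψ)) *
        ((1 : Matrix dR dR ℂ) ⊗ₖ V)ᴴ)) ≤
      mutInfo (mRB (((1 : Matrix dR dR ℂ) ⊗ₖ V) * (Matrix.vecMulVec ψ (star ψ)) *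
        ((1 : Matrix dR dR ℂ) ⊗ₖ V)ᴴ)) ∧
      x = mutInfo (mRB (((1 : Matrix dR dR ℂ) ⊗ₖ V) * (Matrix.vecMulVec ψ (star ψ)) *
        ((1 : Matrix dR dR ℂ) ⊗ₖ V)ᴴ)) } := by
    set d := Fintype.card dA with hd
    set eqv : dA ≃ Fin d := Fintype.equivFin dA with heqv
    set V : Matrix (Fin d × Fin d) dA ℂ :=
      Matrix.of (fun p a => if p.1 = p.2 ∧ p.2 = eqv a then 1 else 0) with hVdef
    have hV : Vᴴ * V = 1 := by
      ext a a'
      simp only [Matrix.mul_apply, Matrix.conjTranspose_apply, hVdef, Matrix.of_apply,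
        Matrix.one_apply, Fintype.sum_prod_type, apply_ite (star : ℂ → ℂ), star_one, star_zero,
        ite_mul, mul_ite, zero_mul, mul_zero, one_mul]
      by_cases h : a = a'
      · subst h
        simp [ite_and, Finset.sum_ite_eq, Finset.sum_ite_eq']
      · have h2 : eqv a ≠ eqv a' := fun h3 => h (eqv.injective h3)
        rw [if_neg h]
        rw [Finset.sum_eq_zero]
        intro m _
        rw [Finset.sum_eq_zero]
        intro n _
        by_cases hA : m = n ∧ n = eqv a
        · have hB : ¬(m = n ∧ n = eqv a') := fun hB => h2 (hA.2.symm.trans hB.2)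
          simpa [hA, hB] using h
        · simp [hA]
    have hς := aux_conj_vecMulVec ((1 : Matrix dR dR ℂ) ⊗ₖ V) ψ
    set φ : dR × (Fin d × Fin d) → ℂ := ((1 : Matrix dR dR ℂ) ⊗ₖ V) *ᵥ ψ with hφdef
    have hφf : ∀ (r : dR) (m n : Fin d), φ (r, (m, n)) =
        if m = n then ψ (r, eqv.symm n) else 0 := by
      intro r m n
      rw [hφdef, aux_mulVec_kron]
      by_cases hmn : m = n
      · simp only [hVdef, Matrix.of_apply, hmn, true_and, if_true, ite_mul, one_mul, zero_mul]
        simp only [← Equiv.symm_apply_eq]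
        simp [Finset.sum_ite_eq]
      · simp [hVdef, hmn]
    have hBE : mRB (Matrix.vecMulVec φ (star φ)) = mRE (Matrix.vecMulVec φ (star φ)) := by
      ext x y
      obtain ⟨r, m⟩ := x
      obtain ⟨r', m'⟩ := y
      simp only [mRB, mRE, Matrix.of_apply, Matrix.vecMulVec_apply, Pi.star_apply, hφf]
      by_cases hmm : m = m'
      · subst hmm
        simp [ite_mul, mul_ite, Finset.sum_ite_eq, Finset.sum_ite_eq',
          apply_ite (star : ℂ → ℂ)]
      · refine (Finset.sum_eq_zero ?_).trans (Finset.sum_eq_zero ?_).symm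
        · intro n _
          by_cases h1 : m = n
          · have h2 : ¬ m' = n := fun hh => hmm (h1.trans hh.symm)
            simp [h2]
          · simp [h1]
        · intro k _
          by_cases h1 : k = m
          · have h2 : ¬ k = m' := fun hh => hmm (h1.symm.trans hh)
            simp [h2]
          · simp [h1]
    refine ⟨d, d, V, hV, ?_, ?_⟩
    · rw [hς, ← hBE]
    · have hk := aux_key ψ V hV
      rw [hς, ← hBE] at hk
      rw [hς]
      linarith
  exact le_antisymm (csInf_le ⟨c, hlb⟩ hmem) (le_csInf ⟨c, hmem⟩ hlb)
end
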